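/- Commute time via effective resistance: for any two vertices x, y of a connected graph G, κ(x,y) = H(x,y) + H(y,x) = vol(G) · R_{xy}, where R_{xy} is the effective resistance between x and y when each edge of G has unit resistance. -/

import Mathlib

open Matrix

/-- `H` is the vector of expected hitting times of the simple random walk on `G`. -/
def IsHittingTime {V : Type*} [Fintype V] (G : SimpleGraph V) [DecidableRel G.Adj]
    (H : V → V → ℝ) : Prop :=
  (∀ y, H y y = 0) ∧
  ∀ x y, x ≠ y → H x y = 1 + (∑ z ∈ G.neighborFinset x, H z y) / (G.degree x)

section Aux

variable {V : Type*} [Fintype V] [DecidableEq V] (G : SimpleGraph V) [DecidableRel G.Adj]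

lemma aux_sum_lapMatrix_mulVec (f : V → ℝ) :
    ∑ v : V, (G.lapMatrix ℝ *ᵥ f) v = 0 := by
  have hcol : ∀ w : V, ∑ v : V, G.lapMatrix ℝ v w = 0 := by
    intro w
    have hrow := congrFun (G.lapMatrix_mulVec_const_eq_zero (R := ℝ)) w
    simp only [mulVec, dotProduct, mul_one, Pi.zero_apply] at hrow
    calc ∑ v : V, G.lapMatrix ℝ v w = ∑ v : V, G.lapMatrix ℝ w v := by
          refine Finset.sum_congr rfl fun v _ => ?_
          exact congrFun (congrFun (G.isSymm_lapMatrix (R := ℝ)) w) v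
      _ = 0 := hrow
  simp only [mulVec, dotProduct]
  rw [Finset.sum_comm]
  simp_all [← Finset.sum_mul]

lemma aux_lap_hitting (hG : G.Connected) (H : V → V → ℝ) (hH : IsHittingTime G H) (t : V) :
    ∀ v, (G.lapMatrix ℝ *ᵥ fun z => H z t) v =
      (G.degree v : ℝ) - (if v = t then ∑ u : V, (G.degree u : ℝ) else 0) := by
  have key : ∀ v, v ≠ t → (G.lapMatrix ℝ *ᵥ fun z => H z t) v = (G.degree v : ℝ) := by
    intro v hv
    have hdeg : (0 : ℝ) < (G.degree v : ℝ) := by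
      have : ∃ w, G.Adj v w := by
        obtain ⟨p⟩ := hG.preconnected v t
        cases p with
        | nil => exact absurd rfl hv
        | cons h _ => exact ⟨_, h⟩
      exact_mod_cast (G.degree_pos_iff_exists_adj v).mpr this
    rw [G.lapMatrix_mulVec_apply, hH.2 v t hv]
    field_simp
    ring
  intro v
  by_cases hv : v = t
  · subst hv
    have hsum := aux_sum_lapMatrix_mulVec G (fun z => H z v)
    rw [← Finset.add_sum_erase _ _ (Finset.mem_univ v)] at hsum
    have h1 : ∑ u ∈ Finset.univ.erase v, (G.lapMatrix ℝ *ᵥ fun z => H z v) u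
        = ∑ u ∈ Finset.univ.erase v, (G.degree u : ℝ) := by
      refine Finset.sum_congr rfl fun u hu => key u (Finset.ne_of_mem_erase hu)
    rw [h1] at hsum
    have h2 : ∑ u ∈ Finset.univ.erase v, (G.degree u : ℝ)
        = (∑ u : V, (G.degree u : ℝ)) - (G.degree v : ℝ) := by
      rw [← Finset.add_sum_erase _ _ (Finset.mem_univ v)]; ring
    rw [if_pos rfl]
    linarith
  · rw [key v hv, if_neg hv, sub_zero]

end Aux

/-- Commute time via effective resistance: $\kappa(x,y)=\mathrm{vol}(G)R_{xy}$,
where the effective resistance $R_{xy}=\varphi(x)-\varphi(y)$ for any potential $\varphi$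
with $L\varphi=\mathbf 1_x-\mathbf 1_y$ (unit current from $x$ to $y$). -/
theorem commute_time_eq_vol_mul_resistance {V : Type*} [Fintype V] [DecidableEq V]
    (G : SimpleGraph V) [DecidableRel G.Adj] (hG : G.Connected)
    (H : V → V → ℝ) (hH : IsHittingTime G H) (x y : V) (φ : V → ℝ)
    (hφ : (G.lapMatrix ℝ) *ᵥ φ =
      fun z => (if z = x then (1 : ℝ) else 0) - (if z = y then (1 : ℝ) else 0)) :
    H x y + H y x = (∑ v : V, (G.degree v : ℝ)) * (φ x - φ y) := by
  set vol : ℝ := ∑ v : V, (G.degree v : ℝ) with hvol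
  set c : V → ℝ := fun v => H v y - H v x - vol * φ v with hc
  have hLc : G.lapMatrix ℝ *ᵥ c = 0 := by
    funext v
    have e1 := aux_lap_hitting G hG H hH y v
    have e2 := aux_lap_hitting G hG H hH x v
    have e3 := congrFun hφ v
    have hlin : (G.lapMatrix ℝ *ᵥ c) v =
        (G.lapMatrix ℝ *ᵥ fun z => H z y) v - (G.lapMatrix ℝ *ᵥ fun z => H z x) v
          - vol * (G.lapMatrix ℝ *ᵥ φ) v := by
      simp [hc, mulVec, dotProduct, Finset.mul_sum, ← Finset.sum_sub_distrib]
      refine Finset.sum_congr rfl fun u _ => by ring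
    rw [hlin, e1, e2, e3]
    simp only [Pi.zero_apply]
    by_cases hvx : v = x <;> by_cases hvy : v = y <;> simp_all
  have hconst : c x = c y := by
    have := (G.lapMatrix_mulVec_eq_zero_iff_forall_reachable (x := c)).mp
      (by rw [hLc])
    exact this x y (hG.preconnected x y)
  have hxx := hH.1 x
  have hyy := hH.1 y
  simp only [hc, hxx, hyy] at hconst
  linarith [hconst]
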